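/- For a fixed prime p, the quantity p·C(⌊n(2p-1)/p⌋, n) is at most ((2 + 1/(p-1))^((p-1)/p) · (2 - 1/p))^n · p for every positive integer n; in particular C(2n, n) ≤ 4^n. -/

import Mathlib

lemma choose_mul_pow_le_aux (a b : ℕ) (hb : b ≤ a) (x y : ℝ) (hx : 0 ≤ x) (hy : 0 ≤ y) :
    (a.choose b : ℝ) * x ^ b * y ^ (a - b) ≤ (x + y) ^ a := by
  rw [add_pow]
  have hmem : b ∈ Finset.range (a + 1) := Finset.mem_range.mpr (Nat.lt_succ_of_le hb)
  have := Finset.single_le_sum (f := fun k => x ^ k * y ^ (a - k) * (a.choose k : ℝ))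
    (fun k _ => by positivity) hmem
  simpa [mul_comm, mul_assoc, mul_left_comm] using this

lemma le_of_cancel_aux (n t : ℕ) (c x y B A : ℝ) (hBx : B * x = 1) (hAy : A * y = 1)
    (hBA : 0 ≤ B ^ n * A ^ t) (key : c * x ^ n * y ^ t ≤ 1) : c ≤ B ^ n * A ^ t := by
  calc c = c * ((B * x) ^ n * (A * y) ^ t) := by rw [hBx, hAy]; simp
    _ = (c * x ^ n * y ^ t) * (B ^ n * A ^ t) := by ring
    _ ≤ 1 * (B ^ n * A ^ t) := mul_le_mul_of_nonneg_right key hBA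
    _ = B ^ n * A ^ t := one_mul _

/-- For a prime `p` and `n ≥ 1`, `p·C(⌊n(2p-1)/p⌋, n)` is at most
`((2 + 1/(p-1))^((p-1)/p) · (2 - 1/p))^n · p`; in particular `C(2n, n) ≤ 4^n`. -/
theorem choose_floor_bound (p n : ℕ) (hp : p.Prime) (hn : 1 ≤ n) :
    ((p * Nat.choose (n * (2 * p - 1) / p) n : ℕ) : ℝ) ≤
      ((2 + 1 / ((p : ℝ) - 1)) ^ (((p : ℝ) - 1) / p) * (2 - 1 / (p : ℝ))) ^ n * p ∧
    Nat.choose (2 * n) n ≤ 4 ^ n := by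
  have hp2 : 2 ≤ p := hp.two_le
  have hpR : (2:ℝ) ≤ p := by exact_mod_cast hp2
  have hp0 : (0:ℝ) < p := by linarith
  have hp1 : (0:ℝ) < (p:ℝ) - 1 := by linarith
  have h2p1 : (0:ℝ) < 2 * (p:ℝ) - 1 := by linarith
  constructor
  · set N := n * (2 * p - 1) / p with hNdef
    have hnN : n ≤ N := by
      have h1 : n * p ≤ n * (2 * p - 1) := Nat.mul_le_mul_left n (by omega)
      calc n = n * p / p := (Nat.mul_div_cancel n (by omega)).symm
        _ ≤ N := Nat.div_le_div_right h1
    set t := N - n with htdef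
    have hNt : N - n = t := rfl
    have hNle : (N : ℝ) ≤ n * (2 * (p:ℝ) - 1) / p := by
      calc (N:ℝ) ≤ ((n * (2*p-1) : ℕ) : ℝ) / (p:ℝ) := Nat.cast_div_le
        _ = n * (2 * (p:ℝ) - 1) / p := by
            push_cast [Nat.cast_sub (by omega : 1 ≤ 2 * p)]; ring
    have htle : (t : ℝ) ≤ n * ((p:ℝ) - 1) / p := by
      have h1 : (t:ℝ) = (N:ℝ) - n := by
        rw [htdef]; push_cast [Nat.cast_sub hnN]; ring
      have h2 : (n:ℝ) * (2 * (p:ℝ) - 1) / p - n = n * ((p:ℝ) - 1) / p := by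
        field_simp; ring
      linarith
    set x : ℝ := (p:ℝ) / (2 * p - 1) with hxdef
    set y : ℝ := ((p:ℝ) - 1) / (2 * p - 1) with hydef
    have hx : 0 < x := by positivity
    have hy : 0 < y := by positivity
    set A : ℝ := (2 * (p:ℝ) - 1) / ((p:ℝ) - 1) with hAdef
    set B : ℝ := (2 * (p:ℝ) - 1) / (p:ℝ) with hBdef
    have hA0 : 0 < A := by positivity
    have hB0 : 0 < B := by positivity
    have key : (N.choose n : ℝ) * x ^ n * y ^ t ≤ 1 := by
      have := choose_mul_pow_le_aux N n hnN x y hx.le hy.le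
      have hsum : x + y = 1 := by rw [hxdef, hydef, ← add_div, div_eq_one_iff_eq h2p1.ne']; ring
      rwa [hNt, hsum, one_pow] at this
    have hBx : B * x = 1 := by rw [hBdef, hxdef]; field_simp
    have hAy : A * y = 1 := by rw [hAdef, hydef]; field_simp
    have hC : (N.choose n : ℝ) ≤ B ^ n * A ^ t :=
      le_of_cancel_aux n t _ x y B A hBx hAy (by positivity) key
    have hA1 : (1:ℝ) ≤ A := by rw [hAdef, le_div_iff₀ hp1]; linarith
    have hAt : A ^ t ≤ (A ^ (((p:ℝ) - 1) / p)) ^ n := by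
      calc A ^ t = A ^ (t : ℝ) := (Real.rpow_natCast A t).symm
        _ ≤ A ^ ((((p:ℝ) - 1) / p) * n) := by
            apply Real.rpow_le_rpow_of_exponent_le hA1
            calc (t:ℝ) ≤ n * ((p:ℝ) - 1) / p := htle
              _ = (((p:ℝ) - 1) / p) * n := by ring
        _ = (A ^ (((p:ℝ) - 1) / p)) ^ (n : ℝ) := Real.rpow_mul hA0.le _ _
        _ = (A ^ (((p:ℝ) - 1) / p)) ^ n := Real.rpow_natCast _ n
    have hAeq : 2 + 1 / ((p:ℝ) - 1) = A := by rw [hAdef]; field_simp; ring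
    have hBeq : 2 - 1 / (p:ℝ) = B := by rw [hBdef]; field_simp
    rw [hAeq, hBeq]
    push_cast
    have hrp : 0 < A ^ (((p:ℝ) - 1) / p) := Real.rpow_pos_of_pos hA0 _
    have hstep : (N.choose n : ℝ) ≤ (A ^ (((p:ℝ) - 1) / p) * B) ^ n := by
      calc (N.choose n : ℝ) ≤ B ^ n * A ^ t := hC
        _ ≤ B ^ n * (A ^ (((p:ℝ) - 1) / p)) ^ n := by
            apply mul_le_mul_of_nonneg_left hAt; positivity
        _ = (A ^ (((p:ℝ) - 1) / p) * B) ^ n := by rw [← mul_pow]; ring_nf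
    calc (p:ℝ) * (N.choose n : ℝ) ≤ (A ^ (((p:ℝ) - 1) / p) * B) ^ n * p := by
          rw [mul_comm]; exact mul_le_mul_of_nonneg_right hstep hp0.le
      _ = _ := rfl
  · calc (2 * n).choose n ≤ (2 * n + 1).choose n :=
          Nat.choose_le_choose n (Nat.le_succ _)
      _ ≤ 4 ^ n := Nat.choose_middle_le_pow n
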